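/- Let l ≥ 2, μ > 0, and λ > 0. Let Ψ : ℝ^{l−1} → ℝ and k : ℝ^{l−1} → ℝ be continuously differentiable, and suppose that at a point z = (η_1, …, η_l) ∈ ℝ^l, writing z' = (η_1, …, η_{l−1}), the virtual closed-loop inequality Σ_{s=1}^{l−2} (∂Ψ/∂η_s)(z')·η_{s+1} + (∂Ψ/∂η_{l−1})(z')·k(z') ≥ λ·Ψ(z') holds. Define Ψ̂ : ℝ^l → ℝ by Ψ̂(z) = Ψ(z') − (1/(2μ))·(η_l − k(z'))² and define k̂(z) = μ·(∂Ψ/∂η_{l−1})(z') + Σ_{s=1}^{l−1} (∂k/∂η_s)(z')·η_{s+1} + (λ/2)·(η_l − k(z')). Then Σ_{s=1}^{l−1} (∂Ψ̂/∂η_s)(z)·η_{s+1} + (∂Ψ̂/∂η_l)(z)·k̂(z) ≥ λ·Ψ̂(z). -/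

import Mathlib

/-- Single backstepping step for the integrator chain `η̇_s = η_{s+1}`: if the
guidance-barrier inequality with rate `λ` holds for `Ψ` under the virtual controller
`k` at level `l−1` (evaluated at `z' = (η_1,…,η_{l−1})`), then the augmented function
`Ψ̂(z) = Ψ(z') − (1/(2μ))(η_l − k(z'))²` satisfies the same inequality at level `l`
under the new virtual controller
`k̂(z) = μ·∂Ψ/∂η_{l−1}(z') + Σ_{s=1}^{l−1} ∂k/∂η_s(z')·η_{s+1} + (λ/2)(η_l − k(z'))`. -/
theorem stmt_11 (l : ℕ) (hl : 2 ≤ l) (μ lam : ℝ) (hμ : 0 < μ) (hlam : 0 < lam)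
    (Ψ k : (Fin (l - 1) → ℝ) → ℝ) (hΨ : ContDiff ℝ 1 Ψ) (hk : ContDiff ℝ 1 k)
    (z : Fin l → ℝ) (z' : Fin (l - 1) → ℝ)
    (hz' : z' = fun i => z ⟨i.val, by have := i.isLt; omega⟩)
    (hineq : (∑ s : Fin (l - 2),
        fderiv ℝ Ψ z' (Pi.single ⟨s.val, by have := s.isLt; omega⟩ 1) *
          z' ⟨s.val + 1, by have := s.isLt; omega⟩)
      + fderiv ℝ Ψ z' (Pi.single ⟨l - 2, by omega⟩ 1) * k z' ≥ lam * Ψ z')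
    (Ψhat : (Fin l → ℝ) → ℝ)
    (hΨhat : ∀ w : Fin l → ℝ, Ψhat w =
      Ψ (fun i => w ⟨i.val, by have := i.isLt; omega⟩) -
        (1 / (2 * μ)) *
          (w ⟨l - 1, by omega⟩ - k (fun i => w ⟨i.val, by have := i.isLt; omega⟩)) ^ 2)
    (khat : ℝ)
    (hkhat : khat =
      μ * fderiv ℝ Ψ z' (Pi.single ⟨l - 2, by omega⟩ 1)
      + (∑ s : Fin (l - 1),
          fderiv ℝ k z' (Pi.single s 1) * z ⟨s.val + 1, by have := s.isLt; omega⟩)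
      + (lam / 2) * (z ⟨l - 1, by omega⟩ - k z')) :
    (∑ s : Fin (l - 1),
        fderiv ℝ Ψhat z (Pi.single ⟨s.val, by have := s.isLt; omega⟩ 1) *
          z ⟨s.val + 1, by have := s.isLt; omega⟩)
      + fderiv ℝ Ψhat z (Pi.single ⟨l - 1, by omega⟩ 1) * khat ≥ lam * Ψhat z := by
  obtain ⟨m, rfl⟩ : ∃ m, l = m + 2 := ⟨l - 2, by omega⟩
  -- transport everything to `Fin (m+1)` / `Fin (m+2)` form (all defeq)
  let Ψ' : (Fin (m + 1) → ℝ) → ℝ := Ψ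
  let k' : (Fin (m + 1) → ℝ) → ℝ := k
  let y : Fin (m + 1) → ℝ := z'
  have hΨ' : ContDiff ℝ 1 Ψ' := hΨ
  have hk' : ContDiff ℝ 1 k' := hk
  have hy : y = fun i : Fin (m + 1) => z ⟨i.val, by omega⟩ := hz'
  have hineq' : (∑ s : Fin m,
      fderiv ℝ Ψ' y (Pi.single ⟨s.val, by omega⟩ 1) * y ⟨s.val + 1, by omega⟩)
      + fderiv ℝ Ψ' y (Pi.single ⟨m, by omega⟩ 1) * k' y ≥ lam * Ψ' y := hineq
  have hΨhat' : ∀ w : Fin (m + 2) → ℝ, Ψhat w =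
      Ψ' (fun i : Fin (m + 1) => w ⟨i.val, by omega⟩) -
        (1 / (2 * μ)) *
          (w ⟨m + 1, by omega⟩ - k' (fun i : Fin (m + 1) => w ⟨i.val, by omega⟩)) ^ 2 := hΨhat
  have hkhat' : khat = μ * fderiv ℝ Ψ' y (Pi.single ⟨m, by omega⟩ 1)
      + (∑ s : Fin (m + 1), fderiv ℝ k' y (Pi.single s 1) * z ⟨s.val + 1, by omega⟩)
      + (lam / 2) * (z ⟨m + 1, by omega⟩ - k' y) := hkhat
  show (∑ s : Fin (m + 1),
        fderiv ℝ Ψhat z (Pi.single ⟨s.val, by omega⟩ 1) * z ⟨s.val + 1, by omega⟩)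
      + fderiv ℝ Ψhat z (Pi.single ⟨m + 1, by omega⟩ 1) * khat ≥ lam * Ψhat z
  clear hineq hΨhat hkhat hz'
  -- linear restriction map
  set E : Fin (m + 1) → Fin (m + 2) := fun i => ⟨i.val, by omega⟩ with hE
  set L : (Fin (m + 2) → ℝ) →L[ℝ] (Fin (m + 1) → ℝ) :=
    ContinuousLinearMap.pi (fun i => ContinuousLinearMap.proj (E i)) with hLdef
  have hLapp : ∀ (w : Fin (m + 2) → ℝ) i, L w i = w (E i) := fun w i => rfl
  have hLz : L z = y := by
    funext i
    rw [hy]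
    rfl
  set P : (Fin (m + 2) → ℝ) →L[ℝ] ℝ :=
    ContinuousLinearMap.proj (⟨m + 1, by omega⟩ : Fin (m + 2)) with hPdef
  set DΨ := fderiv ℝ Ψ' y with hDΨ
  set Dk := fderiv ℝ k' y with hDk
  set ε : ℝ := z ⟨m + 1, by omega⟩ - k' y with hεdef
  set c2 : ℝ := (1 / (2 * μ)) * (2 * ε) with hc2
  -- derivative computations
  have h1 : HasFDerivAt (fun w => Ψ' (L w)) (DΨ.comp L) z := by
    have h := ((hΨ'.differentiable one_ne_zero) (L z)).hasFDerivAt.comp z (L.hasFDerivAt)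
    rw [hLz] at h
    exact h
  have h2 : HasFDerivAt (fun w => k' (L w)) (Dk.comp L) z := by
    have h := ((hk'.differentiable one_ne_zero) (L z)).hasFDerivAt.comp z (L.hasFDerivAt)
    rw [hLz] at h
    exact h
  have h3 : HasFDerivAt (fun w => P w - k' (L w)) (P - Dk.comp L) z :=
    (P.hasFDerivAt).sub h2
  have hPz : P z - k' (L z) = ε := by rw [hLz]; rfl
  have h4 : HasFDerivAt (fun w => (P w - k' (L w)) ^ 2)
      ((2 * ε) • (P - Dk.comp L)) z := by
    have h := h3.mul h3
    have h2e : (P z - k' (L z)) • (P - Dk.comp L) + (P z - k' (L z)) • (P - Dk.comp L)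
        = (2 * ε) • (P - Dk.comp L) := by
      rw [hPz, ← add_smul]; ring_nf
    rw [h2e] at h
    simp only [sq]; exact h
  set D : (Fin (m + 2) → ℝ) →L[ℝ] ℝ := DΨ.comp L - c2 • (P - Dk.comp L) with hDdef
  have hΨhatD : HasFDerivAt Ψhat D z := by
    have h5 := h1.sub (h4.const_mul (1 / (2 * μ)))
    rw [smul_smul] at h5
    have heq : Ψhat = fun w => Ψ' (L w) - (1 / (2 * μ)) * (P w - k' (L w)) ^ 2 := by
      funext w
      rw [hΨhat' w]
      rfl
    rw [heq, hDdef, hc2]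
    exact h5
  have hfd : fderiv ℝ Ψhat z = D := hΨhatD.fderiv
  -- evaluating D on basis vectors
  have hLsingle : ∀ s : Fin (m + 1), L (Pi.single (E s) 1) = Pi.single s 1 := by
    intro s
    funext j
    rw [hLapp]
    simp only [Pi.single_apply]
    congr 1
    simp [hE, Fin.ext_iff]
  have hLlast : L (Pi.single (⟨m + 1, by omega⟩ : Fin (m + 2)) (1:ℝ)) = 0 := by
    funext j
    rw [hLapp]
    have hne : E j ≠ (⟨m + 1, by omega⟩ : Fin (m + 2)) := by
      have := j.isLt
      simp only [hE, ne_eq, Fin.mk.injEq]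
      omega
    simp [Pi.single_apply, hne]
  have hPsingle : ∀ s : Fin (m + 1), P (Pi.single (E s) (1:ℝ)) = 0 := by
    intro s
    have hne : (⟨m + 1, by omega⟩ : Fin (m + 2)) ≠ E s := by
      have := s.isLt
      simp only [hE, ne_eq, Fin.mk.injEq]
      omega
    simp [hPdef, Pi.single_apply, hne]
  have hPlast : P (Pi.single (⟨m + 1, by omega⟩ : Fin (m + 2)) (1:ℝ)) = 1 := by
    simp [hPdef]
  have hDs : ∀ s : Fin (m + 1),
      D (Pi.single (E s) 1) = DΨ (Pi.single s 1) + c2 * Dk (Pi.single s 1) := by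
    intro s
    rw [hDdef]
    simp only [ContinuousLinearMap.sub_apply, ContinuousLinearMap.smul_apply,
      ContinuousLinearMap.comp_apply, smul_eq_mul]
    rw [hLsingle s, hPsingle s]
    ring
  have hDlast : D (Pi.single (⟨m + 1, by omega⟩ : Fin (m + 2)) (1:ℝ)) = -c2 := by
    rw [hDdef]
    simp only [ContinuousLinearMap.sub_apply, ContinuousLinearMap.smul_apply,
      ContinuousLinearMap.comp_apply, smul_eq_mul]
    rw [hLlast, hPlast]
    simp
  -- rewrite the goal
  rw [hfd]
  show (∑ s : Fin (m + 1), D (Pi.single (E s) 1) * z ⟨s.val + 1, by omega⟩)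
      + D (Pi.single (⟨m + 1, by omega⟩ : Fin (m + 2)) 1) * khat ≥ lam * Ψhat z
  have hsum : (∑ s : Fin (m + 1), D (Pi.single (E s) 1) * z ⟨s.val + 1, by omega⟩)
      = (∑ s : Fin (m + 1), DΨ (Pi.single s 1) * z ⟨s.val + 1, by omega⟩)
        + c2 * ∑ s : Fin (m + 1), Dk (Pi.single s 1) * z ⟨s.val + 1, by omega⟩ := by
    rw [Finset.mul_sum, ← Finset.sum_add_distrib]
    apply Finset.sum_congr rfl
    intro s _
    rw [hDs s]
    ring
  rw [hsum, hDlast, hΨhat' z, hkhat']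
  -- split off the last term of the Ψ-sum
  have hsplit : (∑ s : Fin (m + 1), DΨ (Pi.single s 1) * z ⟨s.val + 1, by omega⟩)
      = (∑ s : Fin m, DΨ (Pi.single ⟨s.val, by omega⟩ 1) * z ⟨s.val + 1, by omega⟩)
        + DΨ (Pi.single ⟨m, by omega⟩ 1) * z ⟨m + 1, by omega⟩ := by
    rw [Fin.sum_univ_castSucc]
    rfl
  rw [hsplit]
  have hΨy : Ψ' (fun i : Fin (m + 1) => z ⟨i.val, by omega⟩) = Ψ' y := by rw [hy]
  have hky : k' (fun i : Fin (m + 1) => z ⟨i.val, by omega⟩) = k' y := by rw [hy]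
  rw [hΨy, hky]
  have hineq2 : (∑ s : Fin m,
      DΨ (Pi.single ⟨s.val, by omega⟩ 1) * z ⟨s.val + 1, by omega⟩)
      + DΨ (Pi.single ⟨m, by omega⟩ 1) * k' y ≥ lam * Ψ' y := by
    have hzz : ∀ s : Fin m, y (⟨s.val + 1, by omega⟩ : Fin (m + 1)) = z ⟨s.val + 1, by omega⟩ := by
      intro s; rw [hy]
    calc (∑ s : Fin m, DΨ (Pi.single ⟨s.val, by omega⟩ 1) * z ⟨s.val + 1, by omega⟩)
          + DΨ (Pi.single ⟨m, by omega⟩ 1) * k' y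
        = (∑ s : Fin m, DΨ (Pi.single ⟨s.val, by omega⟩ 1) * y ⟨s.val + 1, by omega⟩)
          + DΨ (Pi.single ⟨m, by omega⟩ 1) * k' y := by
          congr 1
          exact Finset.sum_congr rfl fun s _ => by rw [hzz s]
      _ ≥ lam * Ψ' y := hineq'
  have hzlast : z (⟨m + 1, by omega⟩ : Fin (m + 2)) = ε + k' y := by
    rw [hεdef]; ring
  rw [hzlast]
  have hμ' : μ ≠ 0 := ne_of_gt hμ
  have hc2eq : c2 = ε / μ := by
    rw [hc2]; field_simp
  rw [hc2eq]
  set A := ∑ s : Fin m, DΨ (Pi.single ⟨s.val, by omega⟩ 1) * z ⟨s.val + 1, by omega⟩ with hA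
  set B := DΨ (Pi.single ⟨m, by omega⟩ 1) with hB
  set C := ∑ s : Fin (m + 1), Dk (Pi.single s 1) * z ⟨s.val + 1, by omega⟩ with hC
  have key : A + B * k' y ≥ lam * Ψ' y := hineq2
  have expand : A + B * (ε + k' y) + ε / μ * C + -(ε / μ) * (μ * B + C + lam / 2 * ε)
      = A + B * k' y - lam / (2 * μ) * ε ^ 2 := by
    field_simp
    ring
  have rhs : lam * (Ψ' y - 1 / (2 * μ) * (ε + k' y - k' y) ^ 2)
      = lam * Ψ' y - lam / (2 * μ) * ε ^ 2 := by
    field_simp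
    ring
  rw [rhs]
  calc A + B * (ε + k' y) + ε / μ * C + -(ε / μ) * (μ * B + C + lam / 2 * ε)
      = A + B * k' y - lam / (2 * μ) * ε ^ 2 := expand
    _ ≥ lam * Ψ' y - lam / (2 * μ) * ε ^ 2 := by linarith [key]
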